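/- Let A, B, C, D be points in Euclidean three-space and let O be a point and r > 0 a real number. Suppose P, Q, R, T are points lying on the closed segments AB, BC, CD, DA respectively, each at distance exactly r from O, and suppose each of the four lines through the corresponding pair of vertices is tangent to the sphere of center O and radius r, i.e., every point of the line through A and B is at distance at least r from O, and similarly for the lines through B and C, through C and D, and through D and A. Then the four points P, Q, R, T are coplanar. -/

import Mathlib

set_option maxHeartbeats 1000000


lemma tangent_sq {E : Type*} [NormedAddCommGroup E] [InnerProductSpace ℝ E]
    (s : Set E) (O W X : E) (r : ℝ)
    (hW : W ∈ affineSpan ℝ s) (hX : X ∈ affineSpan ℝ s)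
    (hXd : dist X O = r) (hmin : ∀ Y ∈ affineSpan ℝ s, r ≤ dist Y O) :
    dist W O ^ 2 = dist W X ^ 2 + r ^ 2 := by
  have hr0 : 0 ≤ r := hXd ▸ dist_nonneg
  set v : E := W - X with hv
  set c : ℝ := inner ℝ v (X - O) with hc
  have hq : ∀ t : ℝ, 0 ≤ t ^ 2 * ‖v‖ ^ 2 + 2 * t * c := by
    intro t
    have hvdir : W -ᵥ X ∈ (affineSpan ℝ s).direction :=
      AffineSubspace.vsub_mem_direction hW hX
    have hmem : t • v +ᵥ X ∈ affineSpan ℝ s := by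
      refine AffineSubspace.vadd_mem_of_mem_direction (Submodule.smul_mem _ _ ?_) hX
      simpa [hv] using hvdir
    have h1 := hmin _ hmem
    have h2 : r ^ 2 ≤ dist (t • v +ᵥ X) O ^ 2 :=
      pow_le_pow_left₀ hr0 h1 2
    have h3 : dist (t • v +ᵥ X) O ^ 2 = t ^ 2 * ‖v‖ ^ 2 + 2 * t * c + r ^ 2 := by
      rw [dist_eq_norm]
      have heq : (t • v +ᵥ X) - O = t • v + (X - O) := by
        rw [vadd_eq_add]; abel
      rw [heq, norm_add_sq_real, real_inner_smul_left, norm_smul]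
      have : ‖X - O‖ = r := by rw [← dist_eq_norm]; exact hXd
      rw [this]
      simp [mul_pow]
      ring
    linarith [h2, h3.ge, h3.le]
  have hczero : c = 0 := by
    have hn : (0:ℝ) < ‖v‖ ^ 2 + 1 := by positivity
    have h1 := hq (-c / (‖v‖ ^ 2 + 1))
    have h2 : 0 ≤ c ^ 2 * ‖v‖ ^ 2 - 2 * c ^ 2 * (‖v‖ ^ 2 + 1) := by
      have h3 := mul_le_mul_of_nonneg_left h1 (le_of_lt (mul_pos hn hn))
      calc 0 = (‖v‖ ^ 2 + 1) * (‖v‖ ^ 2 + 1) * 0 := by ring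
        _ ≤ (‖v‖ ^ 2 + 1) * (‖v‖ ^ 2 + 1) * ((-c / (‖v‖ ^ 2 + 1)) ^ 2 * ‖v‖ ^ 2 + 2 * (-c / (‖v‖ ^ 2 + 1)) * c) := h3
        _ = c ^ 2 * ‖v‖ ^ 2 - 2 * c ^ 2 * (‖v‖ ^ 2 + 1) := by field_simp; ring
    have h4 : c ^ 2 ≤ 0 := by nlinarith [sq_nonneg ‖v‖]
    have := le_antisymm h4 (sq_nonneg c)
    exact pow_eq_zero_iff (by norm_num) |>.mp this
  have hWO : W - O = v + (X - O) := by rw [hv]; abel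
  rw [dist_eq_norm, dist_eq_norm, hWO, norm_add_sq_real, ← hc, hczero]
  have : ‖X - O‖ = r := by rw [← dist_eq_norm]; exact hXd
  rw [this]
  ring


lemma seg_comb {E : Type*} [NormedAddCommGroup E] [NormedSpace ℝ E]
    {A B P : E} (hP : P ∈ segment ℝ A B) :
    (dist B P) • A + (dist A P) • B = (dist A P + dist B P) • P := by
  obtain ⟨u, t, hu, ht, hut, hP⟩ := hP
  have hu1 : u = 1 - t := by linarith
  subst hu1
  have hAP : dist A P = t * ‖A - B‖ := by
    rw [dist_eq_norm, ← hP, show A - ((1 - t) • A + t • B) = t • (A - B) by module,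
      norm_smul, Real.norm_eq_abs, abs_of_nonneg ht]
  have hBP : dist B P = (1 - t) * ‖A - B‖ := by
    rw [dist_eq_norm, ← hP, show B - ((1 - t) • A + t • B) = (1 - t) • (B - A) by module,
      norm_smul, Real.norm_eq_abs, abs_of_nonneg hu, show ‖B - A‖ = ‖A - B‖ from by rw [← neg_sub, norm_neg]]
  rw [hAP, hBP, ← hP]
  module

lemma seg_mem_span {E : Type*} [NormedAddCommGroup E] [NormedSpace ℝ E]
    {A B P : E} (hP : P ∈ segment ℝ A B) :
    P ∈ affineSpan ℝ ({A, B} : Set E) := by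
  obtain ⟨u, t, hu, ht, hut, hP⟩ := hP
  have hu1 : u = 1 - t := by linarith
  subst hu1
  have hAm : A ∈ affineSpan ℝ ({A, B} : Set E) := mem_affineSpan ℝ (by simp)
  have hBm : B ∈ affineSpan ℝ ({A, B} : Set E) := mem_affineSpan ℝ (by simp)
  have h := AffineSubspace.smul_vsub_vadd_mem (affineSpan ℝ ({A, B} : Set E)) t hBm hAm hAm
  have heq : t • (B -ᵥ A) +ᵥ A = (1 - t) • A + t • B := by
    rw [vadd_eq_add, vsub_eq_sub]; module
  rwa [heq, hP] at h


theorem stmt_9 (A B C D O P Q R T : EuclideanSpace ℝ (Fin 3)) (r : ℝ) (hr : 0 < r)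
    (hP : P ∈ segment ℝ A B) (hQ : Q ∈ segment ℝ B C)
    (hR : R ∈ segment ℝ C D) (hT : T ∈ segment ℝ D A)
    (hPd : dist P O = r) (hQd : dist Q O = r) (hRd : dist R O = r) (hTd : dist T O = r)
    (hAB : ∀ X ∈ affineSpan ℝ ({A, B} : Set (EuclideanSpace ℝ (Fin 3))), r ≤ dist X O)
    (hBC : ∀ X ∈ affineSpan ℝ ({B, C} : Set (EuclideanSpace ℝ (Fin 3))), r ≤ dist X O)
    (hCD : ∀ X ∈ affineSpan ℝ ({C, D} : Set (EuclideanSpace ℝ (Fin 3))), r ≤ dist X O)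
    (hDA : ∀ X ∈ affineSpan ℝ ({D, A} : Set (EuclideanSpace ℝ (Fin 3))), r ≤ dist X O) :
    Coplanar ℝ ({P, Q, R, T} : Set (EuclideanSpace ℝ (Fin 3))) := by
  have hAm1 : A ∈ affineSpan ℝ ({A, B} : Set (EuclideanSpace ℝ (Fin 3))) := mem_affineSpan ℝ (by simp)
  have hBm1 : B ∈ affineSpan ℝ ({A, B} : Set (EuclideanSpace ℝ (Fin 3))) := mem_affineSpan ℝ (by simp)
  have hBm2 : B ∈ affineSpan ℝ ({B, C} : Set (EuclideanSpace ℝ (Fin 3))) := mem_affineSpan ℝ (by simp)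
  have hCm2 : C ∈ affineSpan ℝ ({B, C} : Set (EuclideanSpace ℝ (Fin 3))) := mem_affineSpan ℝ (by simp)
  have hCm3 : C ∈ affineSpan ℝ ({C, D} : Set (EuclideanSpace ℝ (Fin 3))) := mem_affineSpan ℝ (by simp)
  have hDm3 : D ∈ affineSpan ℝ ({C, D} : Set (EuclideanSpace ℝ (Fin 3))) := mem_affineSpan ℝ (by simp)
  have hDm4 : D ∈ affineSpan ℝ ({D, A} : Set (EuclideanSpace ℝ (Fin 3))) := mem_affineSpan ℝ (by simp)
  have hAm4 : A ∈ affineSpan ℝ ({D, A} : Set (EuclideanSpace ℝ (Fin 3))) := mem_affineSpan ℝ (by simp)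
  have hPs := seg_mem_span hP
  have hQs := seg_mem_span hQ
  have hRs := seg_mem_span hR
  have hTs := seg_mem_span hT
  have dist_eq : ∀ x y z : EuclideanSpace ℝ (Fin 3), dist x y ^ 2 = dist x z ^ 2 → dist x y = dist x z := by
    intro x y z h
    rw [← Real.sqrt_sq (dist_nonneg (x := x) (y := y)), h, Real.sqrt_sq dist_nonneg]
  have hA : dist A T = dist A P := by
    apply dist_eq
    have h1 := tangent_sq {A, B} O A P r hAm1 hPs hPd hAB
    have h2 := tangent_sq {D, A} O A T r hAm4 hTs hTd hDA
    linarith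
  have hB : dist B Q = dist B P := by
    apply dist_eq
    have h1 := tangent_sq {A, B} O B P r hBm1 hPs hPd hAB
    have h2 := tangent_sq {B, C} O B Q r hBm2 hQs hQd hBC
    linarith
  have hC : dist C R = dist C Q := by
    apply dist_eq
    have h1 := tangent_sq {B, C} O C Q r hCm2 hQs hQd hBC
    have h2 := tangent_sq {C, D} O C R r hCm3 hRs hRd hCD
    linarith
  have hD : dist D T = dist D R := by
    apply dist_eq
    have h1 := tangent_sq {C, D} O D R r hDm3 hRs hRd hCD
    have h2 := tangent_sq {D, A} O D T r hDm4 hTs hTd hDA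
    linarith
  by_cases ha : dist A P = 0
  · have hPA : P = A := by rwa [dist_comm, dist_eq_zero] at ha
    have hTA : T = A := by rw [← dist_eq_zero, dist_comm, hA]; exact ha
    have hPT : P = T := by rw [hPA, hTA]
    have hset : ({P, Q, R, T} : Set (EuclideanSpace ℝ (Fin 3))) = {T, Q, R} := by
      rw [hPT]; ext x; simp only [Set.mem_insert_iff, Set.mem_singleton_iff]; tauto
    rw [hset]; exact coplanar_triple (k := ℝ) T Q R
  by_cases hb : dist B P = 0
  · have hPB : P = B := by rwa [dist_comm, dist_eq_zero] at hb
    have hQB : Q = B := by rw [← dist_eq_zero, dist_comm, hB]; exact hb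
    have hPQ : P = Q := by rw [hPB, hQB]
    have hset : ({P, Q, R, T} : Set (EuclideanSpace ℝ (Fin 3))) = {Q, R, T} := by
      rw [hPQ]; ext x; simp only [Set.mem_insert_iff, Set.mem_singleton_iff]; tauto
    rw [hset]; exact coplanar_triple (k := ℝ) Q R T
  by_cases hc : dist C Q = 0
  · have hQC : Q = C := by rwa [dist_comm, dist_eq_zero] at hc
    have hRC : R = C := by rw [← dist_eq_zero, dist_comm, hC]; exact hc
    have hQR : Q = R := by rw [hQC, hRC]
    have hset : ({P, Q, R, T} : Set (EuclideanSpace ℝ (Fin 3))) = {P, R, T} := by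
      rw [hQR]; ext x; simp only [Set.mem_insert_iff, Set.mem_singleton_iff]; tauto
    rw [hset]; exact coplanar_triple (k := ℝ) P R T
  by_cases hd : dist D R = 0
  · have hRD : R = D := by rwa [dist_comm, dist_eq_zero] at hd
    have hTD : T = D := by rw [← dist_eq_zero, dist_comm, hD]; exact hd
    have hRT : R = T := by rw [hRD, hTD]
    have hset : ({P, Q, R, T} : Set (EuclideanSpace ℝ (Fin 3))) = {P, Q, T} := by
      rw [hRT]; ext x; simp only [Set.mem_insert_iff, Set.mem_singleton_iff]; tauto
    rw [hset]; exact coplanar_triple (k := ℝ) P Q T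
  set a := dist A P with ha'
  set b := dist B P with hb'
  set c := dist C Q with hc'
  set d := dist D R with hd'
  have hapos : 0 < a := lt_of_le_of_ne dist_nonneg (Ne.symm ha)
  have hbpos : 0 < b := lt_of_le_of_ne dist_nonneg (Ne.symm hb)
  have hcpos : 0 < c := lt_of_le_of_ne dist_nonneg (Ne.symm hc)
  have hdpos : 0 < d := lt_of_le_of_ne dist_nonneg (Ne.symm hd)
  have e1 : b • A + a • B = (a + b) • P := seg_comb hP
  have e2 : c • B + b • C = (b + c) • Q := by
    have h := seg_comb hQ; rwa [hB] at h
  have e3 : d • C + c • D = (c + d) • R := by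
    have h := seg_comb hR; rwa [hC] at h
  have e4 : a • D + d • A = (d + a) • T := by
    have h := seg_comb hT; rwa [hA, hD] at h
  have key : ((a + b) * (c * d)) • P
      = ((b + c) * (a * d)) • Q - ((c + d) * (a * b)) • R + ((d + a) * (b * c)) • T := by
    have h1 := congrArg (fun x : EuclideanSpace ℝ (Fin 3) => (c * d) • x) e1
    have h2 := congrArg (fun x : EuclideanSpace ℝ (Fin 3) => (a * d) • x) e2
    have h3 := congrArg (fun x : EuclideanSpace ℝ (Fin 3) => (a * b) • x) e3
    have h4 := congrArg (fun x : EuclideanSpace ℝ (Fin 3) => (b * c) • x) e4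
    have comb : (c * d) • (b • A + a • B) - (a * d) • (c • B + b • C)
        + (a * b) • (d • C + c • D) - (b * c) • (a • D + d • A)
        = (0 : EuclideanSpace ℝ (Fin 3)) := by module
    rw [h1, h2, h3, h4] at comb
    linear_combination (norm := module) comb
  set α : ℝ := (a + b) * (c * d) with hα'
  have hαpos : (0 : ℝ) < α := by positivity
  have hαne : α ≠ 0 := ne_of_gt hαpos
  set x : ℝ := ((b + c) * (a * d)) / α with hx'
  set y : ℝ := -((c + d) * (a * b)) / α with hy'
  have hP_eq : P = (x • (Q - T) + y • (R - T)) + T := by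
    refine smul_right_injective (EuclideanSpace ℝ (Fin 3)) hαne ?_
    show α • P = α • ((x • (Q - T) + y • (R - T)) + T)
    rw [key, hx', hy']
    match_scalars <;> field_simp <;> ring
  have hQm : Q ∈ affineSpan ℝ ({Q, R, T} : Set (EuclideanSpace ℝ (Fin 3))) := mem_affineSpan ℝ (by simp)
  have hRm : R ∈ affineSpan ℝ ({Q, R, T} : Set (EuclideanSpace ℝ (Fin 3))) := mem_affineSpan ℝ (by simp)
  have hTm : T ∈ affineSpan ℝ ({Q, R, T} : Set (EuclideanSpace ℝ (Fin 3))) := mem_affineSpan ℝ (by simp)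
  have hdir : x • (Q - T) + y • (R - T) ∈ (affineSpan ℝ ({Q, R, T} : Set (EuclideanSpace ℝ (Fin 3)))).direction := by
    apply Submodule.add_mem <;> [skip; skip] <;> apply Submodule.smul_mem
    · simpa using AffineSubspace.vsub_mem_direction hQm hTm
    · simpa using AffineSubspace.vsub_mem_direction hRm hTm
  have hPm : P ∈ affineSpan ℝ ({Q, R, T} : Set (EuclideanSpace ℝ (Fin 3))) := by
    have h := AffineSubspace.vadd_mem_of_mem_direction hdir hTm
    rw [hP_eq]
    simpa using h
  have hins : ({P, Q, R, T} : Set (EuclideanSpace ℝ (Fin 3))) = insert P ({Q, R, T} : Set (EuclideanSpace ℝ (Fin 3))) := rfl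
  rw [hins, coplanar_insert_iff_of_mem_affineSpan hPm]
  exact coplanar_triple (k := ℝ) Q R T
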